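/- Let Z be a real Hilbert space and let T, A : Z → Z be bounded linear operators. Suppose there exist ε > 0 and a bounded self-adjoint linear operator P : Z → Z which is coercive (i.e., there exists α > 0 with ⟨x, P x⟩ ≥ α‖x‖² for all x ∈ Z) such that ⟨x, (T* P A + A* P T) x⟩ ≤ −ε ‖T x‖² for all x ∈ Z. Then there exist M > 0 and α' > 0 such that every differentiable x : [0,∞) → Z satisfying T x'(t) = A x(t) for all t ≥ 0 satisfies ‖T x(t)‖ ≤ M e^{−α' t} ‖T x(0)‖ for all t ≥ 0. -/

import Mathlib

open MeasureTheory Filter Topology ContinuousLinearMap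
open scoped RealInnerProductSpace

/-- Primal LPI for Stability (Theorem 11): feasibility of the operator
inequality `T*PA + A*PT ≼ −ε T*T` with `P` self-adjoint, bounded, coercive
implies exponential stability of the PIE `T ẋ = A x`. -/
theorem primal_LPI_stability
    {Z : Type*} [NormedAddCommGroup Z] [InnerProductSpace ℝ Z] [CompleteSpace Z]
    (T A : Z →L[ℝ] Z) (ε : ℝ) (hε : 0 < ε)
    (P : Z →L[ℝ] Z) (hPsa : IsSelfAdjoint P)
    (hPcoer : ∃ α > (0:ℝ), ∀ x : Z, α * ‖x‖^2 ≤ ⟪x, P x⟫)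
    (hLPI : ∀ x : Z,
      ⟪x, ((adjoint T).comp (P.comp A) + (adjoint A).comp (P.comp T)) x⟫
        ≤ -ε * ‖T x‖^2) :
    ∃ M > (0:ℝ), ∃ α' > (0:ℝ), ∀ x : ℝ → Z,
      (∀ t ∈ Set.Ici (0:ℝ), DifferentiableAt ℝ x t) →
      (∀ t ∈ Set.Ici (0:ℝ), T (deriv x t) = A (x t)) →
      ∀ t ∈ Set.Ici (0:ℝ), ‖T (x t)‖ ≤ M * Real.exp (-α' * t) * ‖T (x 0)‖ := by
  obtain ⟨α, hα, hco⟩ := hPcoer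
  have hPnorm : (0:ℝ) < ‖P‖ + 1 := by positivity
  set c : ℝ := ε / (‖P‖ + 1) with hc
  have hcpos : 0 < c := div_pos hε hPnorm
  have hcmul : c * (‖P‖ + 1) = ε := div_mul_cancel₀ _ (ne_of_gt hPnorm)
  refine ⟨Real.sqrt ((‖P‖ + 1) / α), Real.sqrt_pos.mpr (by positivity), c / 2,
    by positivity, ?_⟩
  intro x hxdiff hxode t ht
  set V : ℝ → ℝ := fun s => ⟪T (x s), P (T (x s))⟫ with hVdef
  have hVle : ∀ s, V s ≤ (‖P‖ + 1) * ‖T (x s)‖ ^ 2 := by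
    intro s
    have h1 : ⟪T (x s), P (T (x s))⟫ ≤ ‖T (x s)‖ * ‖P (T (x s))‖ :=
      real_inner_le_norm _ _
    have h2 : ‖P (T (x s))‖ ≤ ‖P‖ * ‖T (x s)‖ := P.le_opNorm _
    nlinarith [norm_nonneg (T (x s))]
  have hVge : ∀ s, α * ‖T (x s)‖ ^ 2 ≤ V s := fun s => hco (T (x s))
  have hVnonneg : ∀ s, 0 ≤ V s := by
    intro s
    have := hVge s
    nlinarith [norm_nonneg (T (x s)), sq_nonneg ‖T (x s)‖]
  -- derivative of V
  have hTd : ∀ s ∈ Set.Ici (0:ℝ),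
      HasDerivAt (fun u => T (x u)) (A (x s)) s := by
    intro s hs
    have h1 : HasDerivAt (fun u => T (x u)) (T (deriv x s)) s :=
      (T.hasFDerivAt).comp_hasDerivAt s (hxdiff s hs).hasDerivAt
    rwa [hxode s hs] at h1
  have hPTd : ∀ s ∈ Set.Ici (0:ℝ),
      HasDerivAt (fun u => P (T (x u))) (P (A (x s))) s := by
    intro s hs
    exact (P.hasFDerivAt).comp_hasDerivAt s (hTd s hs)
  have hVd : ∀ s ∈ Set.Ici (0:ℝ),
      HasDerivAt V (⟪T (x s), P (A (x s))⟫ + ⟪A (x s), P (T (x s))⟫) s := by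
    intro s hs
    exact HasDerivAt.inner ℝ (hTd s hs) (hPTd s hs)
  have hDle : ∀ s ∈ Set.Ici (0:ℝ),
      ⟪T (x s), P (A (x s))⟫ + ⟪A (x s), P (T (x s))⟫ ≤ -c * V s := by
    intro s hs
    have h1 := hLPI (x s)
    have h2 : ⟪x s, ((adjoint T).comp (P.comp A) + (adjoint A).comp (P.comp T)) (x s)⟫
        = ⟪T (x s), P (A (x s))⟫ + ⟪A (x s), P (T (x s))⟫ := by
      simp only [ContinuousLinearMap.add_apply, ContinuousLinearMap.comp_apply]
      rw [inner_add_right, ContinuousLinearMap.adjoint_inner_right,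
        ContinuousLinearMap.adjoint_inner_right]
    rw [h2] at h1
    have h3 : c * V s ≤ ε * ‖T (x s)‖ ^ 2 := by
      have := hVle s
      calc c * V s ≤ c * ((‖P‖ + 1) * ‖T (x s)‖ ^ 2) := by
            exact mul_le_mul_of_nonneg_left this (le_of_lt hcpos)
        _ = ε * ‖T (x s)‖ ^ 2 := by rw [← mul_assoc, hcmul]
    linarith
  -- Define g s = V s * exp (c * s) and show it is antitone on [0, ∞)
  set g : ℝ → ℝ := fun s => V s * Real.exp (c * s) with hgdef
  have hgd : ∀ s ∈ Set.Ici (0:ℝ),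
      HasDerivAt g ((⟪T (x s), P (A (x s))⟫ + ⟪A (x s), P (T (x s))⟫) * Real.exp (c * s)
        + V s * (Real.exp (c * s) * c)) s := by
    intro s hs
    have hexp : HasDerivAt (fun u => Real.exp (c * u)) (Real.exp (c * s) * c) s := by
      have : HasDerivAt (fun u : ℝ => c * u) c s := by
        simpa using (hasDerivAt_id s).const_mul c
      exact this.exp
    exact (hVd s hs).mul hexp
  have hanti : AntitoneOn g (Set.Ici (0:ℝ)) := by
    apply antitoneOn_of_deriv_nonpos (convex_Ici 0)
    · intro s hs
      exact ((hgd s hs).continuousAt).continuousWithinAt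
    · intro s hs
      rw [interior_Ici] at hs
      exact (hgd s (Set.mem_Ici.mpr (le_of_lt (Set.mem_Ioi.mp hs)))).differentiableAt.differentiableWithinAt
    · intro s hs
      rw [interior_Ici] at hs
      rw [(hgd s (Set.mem_Ici.mpr (le_of_lt (Set.mem_Ioi.mp hs)))).deriv]
      have h1 := hDle s (Set.mem_Ici.mpr (le_of_lt (Set.mem_Ioi.mp hs)))
      have h2 : (0:ℝ) < Real.exp (c * s) := Real.exp_pos _
      nlinarith [hVnonneg s]
  have hgt : g t ≤ g 0 := hanti Set.self_mem_Ici ht ht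
  have hexp0 : Real.exp (c * (0:ℝ)) = 1 := by simp
  have hVt : V t * Real.exp (c * t) ≤ V 0 := by
    have := hgt
    simp only [hgdef, hexp0, mul_one] at this
    exact this
  -- combine
  have hexppos : (0:ℝ) < Real.exp (c * t) := Real.exp_pos _
  have key : α * ‖T (x t)‖ ^ 2 * Real.exp (c * t) ≤ (‖P‖ + 1) * ‖T (x 0)‖ ^ 2 := by
    calc α * ‖T (x t)‖ ^ 2 * Real.exp (c * t)
        ≤ V t * Real.exp (c * t) :=
          mul_le_mul_of_nonneg_right (hVge t) (le_of_lt hexppos)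
      _ ≤ V 0 := hVt
      _ ≤ (‖P‖ + 1) * ‖T (x 0)‖ ^ 2 := hVle 0
  -- final sqrt manipulation
  have hsq : ‖T (x t)‖ ^ 2 ≤
      (Real.sqrt ((‖P‖ + 1) / α) * Real.exp (-(c / 2) * t) * ‖T (x 0)‖) ^ 2 := by
    have hsqrt : Real.sqrt ((‖P‖ + 1) / α) ^ 2 = (‖P‖ + 1) / α :=
      Real.sq_sqrt (by positivity)
    have hexp2 : Real.exp (-(c / 2) * t) ^ 2 = Real.exp (-(c * t)) := by
      rw [sq, ← Real.exp_add]; ring_nf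
    rw [mul_pow, mul_pow, hsqrt, hexp2]
    have hE : Real.exp (c * t) * Real.exp (-(c * t)) = 1 := by
      rw [← Real.exp_add]; simp
    rw [div_mul_eq_mul_div, div_mul_eq_mul_div, le_div_iff₀ hα]
    nlinarith [key, hE, Real.exp_pos (-(c * t)), hexppos,
      mul_nonneg (mul_nonneg (norm_nonneg (T (x 0))) (norm_nonneg (T (x 0)))) hPnorm.le]
  have h1 : (0:ℝ) ≤ Real.sqrt ((‖P‖ + 1) / α) * Real.exp (-(c / 2) * t) * ‖T (x 0)‖ := by
    positivity
  calc ‖T (x t)‖ = Real.sqrt (‖T (x t)‖ ^ 2) := (Real.sqrt_sq (norm_nonneg _)).symm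
    _ ≤ Real.sqrt ((Real.sqrt ((‖P‖ + 1) / α) * Real.exp (-(c / 2) * t) * ‖T (x 0)‖) ^ 2) :=
        Real.sqrt_le_sqrt hsq
    _ = Real.sqrt ((‖P‖ + 1) / α) * Real.exp (-(c / 2) * t) * ‖T (x 0)‖ :=
        Real.sqrt_sq h1
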